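/- With the notation above, for Im z ≠ 0 the resolvent identity (H + W − z)⁻¹ P₀ (I − Q(z,W)) = (H̄ + W − z)⁻¹ P₀ holds, and consequently (H + W − z)⁻¹ = (H̄ + W − z)⁻¹ + (H̄ + W − z)⁻¹ P₀ (I − Q(z,W))⁻¹ P₀ (H̄ + W − z)⁻¹. -/

import Mathlib

/- Statement 2: (H+W−z)⁻¹P₀(I−Q) = (H̄+W−z)⁻¹P₀ and the consequent resolvent identity. -/
theorem stmt_2 {ℋ : Type*} [NormedAddCommGroup ℋ] [InnerProductSpace ℂ ℋ] [CompleteSpace ℋ]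
    (D : Submodule ℂ ℋ) (H : D →ₗ[ℂ] ℋ)
    (hsym : ∀ x y : D, (inner ℂ (H x) (y : ℋ) : ℂ) = inner ℂ (x : ℋ) (H y))
    (l₀ : ℝ) (K : Submodule ℂ ℋ) [FiniteDimensional ℂ K]
    (hK : ∀ x : ℋ, x ∈ K ↔ ∃ hx : x ∈ D, H ⟨x, hx⟩ = (l₀ : ℂ) • x)
    (P₀ : ℋ →L[ℂ] ℋ) (hP₀ : ∀ x : ℋ, P₀ x = (Submodule.orthogonalProjection K x : ℋ))
    (W : ℋ →L[ℂ] ℋ) (hW : IsSelfAdjoint W)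
    (z : ℂ) (hz : z.im ≠ 0)
    (Rbar : ℋ →L[ℂ] ℋ)  -- Rbar = (H̄ + W − z)⁻¹
    (hRbar₁ : ∀ ψ : D, Rbar (H ψ + P₀ (ψ : ℋ) + W (ψ : ℋ) - z • (ψ : ℋ)) = ψ)
    (hRbar₂ : ∀ y : ℋ, ∃ hy : Rbar y ∈ D,
      H ⟨Rbar y, hy⟩ + P₀ (Rbar y) + W (Rbar y) - z • (Rbar y) = y)
    (R : ℋ →L[ℂ] ℋ)  -- R = (H + W − z)⁻¹
    (hRfull₁ : ∀ ψ : D, R (H ψ + W (ψ : ℋ) - z • (ψ : ℋ)) = ψ)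
    (hRfull₂ : ∀ y : ℋ, ∃ hy : R y ∈ D,
      H ⟨R y, hy⟩ + W (R y) - z • (R y) = y)
    (S : ℋ →L[ℂ] ℋ)  -- S = (I − Q(z,W))⁻¹
    (hS₁ : (1 - P₀ ∘L Rbar ∘L P₀) ∘L S = 1)
    (hS₂ : S ∘L (1 - P₀ ∘L Rbar ∘L P₀) = 1) :
    R ∘L P₀ ∘L (1 - P₀ ∘L Rbar ∘L P₀) = Rbar ∘L P₀ ∧
      R = Rbar + Rbar ∘L P₀ ∘L S ∘L P₀ ∘L Rbar := by
  have hPidem : ∀ x, P₀ (P₀ x) = P₀ x := by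
    intro x
    rw [hP₀ x, hP₀]
    exact congrArg _ (Submodule.orthogonalProjection_mem_subspace_eq_self ⟨_, (Submodule.orthogonalProjection K x).2⟩)
  have key : ∀ y, R (y - P₀ (Rbar y)) = Rbar y := by
    intro y
    obtain ⟨hy, heq⟩ := hRbar₂ y
    have h2 : H ⟨Rbar y, hy⟩ + W (Rbar y) - z • (Rbar y) = y - P₀ (Rbar y) := by
      calc H ⟨Rbar y, hy⟩ + W (Rbar y) - z • (Rbar y)
          = (H ⟨Rbar y, hy⟩ + P₀ (Rbar y) + W (Rbar y) - z • (Rbar y)) - P₀ (Rbar y) := by abel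
        _ = y - P₀ (Rbar y) := by rw [heq]
    have h3 := hRfull₁ ⟨Rbar y, hy⟩
    rw [h2] at h3
    exact h3
  have part1 : R ∘L P₀ ∘L (1 - P₀ ∘L Rbar ∘L P₀) = Rbar ∘L P₀ := by
    ext x
    simp only [ContinuousLinearMap.comp_apply, ContinuousLinearMap.sub_apply,
      ContinuousLinearMap.one_apply]
    rw [map_sub, hPidem]
    exact key (P₀ x)
  refine ⟨part1, ?_⟩
  have part1' : R ∘L P₀ = Rbar ∘L P₀ ∘L S := by
    calc R ∘L P₀ = (R ∘L P₀ ∘L (1 - P₀ ∘L Rbar ∘L P₀)) ∘L S := by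
          rw [ContinuousLinearMap.comp_assoc, ContinuousLinearMap.comp_assoc, hS₁]
          ext x; simp
      _ = Rbar ∘L P₀ ∘L S := by rw [part1, ContinuousLinearMap.comp_assoc]
  ext y
  have := key y
  have h4 : R (P₀ (Rbar y)) = Rbar (P₀ (S (P₀ (Rbar y)))) := by
    have h5 := congrFun (congrArg DFunLike.coe part1') (P₀ (Rbar y))
    simp only [ContinuousLinearMap.comp_apply] at h5
    rw [hPidem] at h5
    exact h5
  simp only [ContinuousLinearMap.add_apply, ContinuousLinearMap.comp_apply]
  rw [map_sub] at this
  rw [← h4]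
  linear_combination (norm := module) this
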